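/- Let μ ∈ ℝ^d, let Σ be a d×d symmetric positive-definite matrix, let γ ≥ 0, and let X ∼ N(μ, Σ) be a Gaussian random vector, with u(x) = exp(−½(x−μ)ᵀΣ⁻¹(x−μ)). Then the population γ-Stein estimating equations for the Gaussian model hold at the true parameters: E[u(X)^γ · Σ⁻¹(X − μ)] = 0 and E[u(X)^γ · ((γ+1)Σ⁻¹(X − μ)(X − μ)ᵀ − I_d)] = 0 (the zero d×d matrix). -/

import Mathlib

open MeasureTheory Real Matrix

/-- Unnormalized Gaussian density `u(x) = exp(−½ (x−μ)ᵀ Σ⁻¹ (x−μ))`. -/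
noncomputable def gaussU {d : ℕ} (μv : Fin d → ℝ) (S : Matrix (Fin d) (Fin d) ℝ)
    (x : Fin d → ℝ) : ℝ :=
  Real.exp (-(1 / 2 : ℝ) * ((x - μv) ⬝ᵥ (S⁻¹ *ᵥ (x - μv))))

lemma i_exp : Integrable fun t : ℝ => Real.exp (-(1/2) * t^2) := integrable_exp_neg_mul_sq (by norm_num)
lemma i_t_exp : Integrable fun t : ℝ => t * Real.exp (-(1/2) * t^2) := integrable_mul_exp_neg_mul_sq (by norm_num)
lemma i_t2_exp : Integrable fun t : ℝ => t^2 * Real.exp (-(1/2) * t^2) := by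
  have := integrable_rpow_mul_exp_neg_mul_sq (b := 1/2) (by norm_num) (s := 2) (by norm_num)
  simpa [Real.rpow_natCast] using this

lemma int_exp : ∫ t : ℝ, Real.exp (-(1/2) * t^2) = √(2*π) := by
  rw [integral_gaussian, show π / (1/2) = 2 * π by ring]

lemma int_t2_exp : ∫ t : ℝ, t^2 * Real.exp (-(1/2) * t^2) = √(2*π) := by
  have hu : ∀ x : ℝ, HasDerivAt (fun t : ℝ => t) 1 x := fun x => hasDerivAt_id x
  have hv : ∀ x : ℝ, HasDerivAt (fun t : ℝ => -Real.exp (-(1/2) * t^2))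
      (x * Real.exp (-(1/2) * x^2)) x := by
    intro x
    have h1 : HasDerivAt (fun t : ℝ => -(1/2) * t^2) (-(1/2) * (2 * x)) x := by
      simpa using ((hasDerivAt_pow 2 x).const_mul (-(1/2 : ℝ)))
    have := (h1.exp).neg
    refine this.congr_deriv ?_
    ring
  have key := integral_mul_deriv_eq_deriv_mul_of_integrable (fun x _ => hu x) (fun x _ => hv x) ?_ ?_ ?_
  · rw [show ∫ t : ℝ, t^2 * Real.exp (-(1/2) * t^2)
        = ∫ x : ℝ, (fun t : ℝ => t) x * (fun x => x * Real.exp (-(1/2) * x^2)) x by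
        congr 1; ext t; ring]
    rw [key, ← int_exp, ← integral_neg]
    congr 1; ext t; simp
  · have : ((fun t : ℝ => t) * fun x => x * Real.exp (-(1/2) * x^2))
        = fun t : ℝ => t^2 * Real.exp (-(1/2) * t^2) := by ext t; simp [Pi.mul_apply]; ring
    rw [this]; exact i_t2_exp
  · have : ((fun _ : ℝ => (1:ℝ)) * fun t : ℝ => -Real.exp (-(1/2) * t^2))
        = fun t : ℝ => -Real.exp (-(1/2) * t^2) := by ext t; simp
    rw [this]; exact i_exp.neg
  · have : ((fun t : ℝ => t) * fun t : ℝ => -Real.exp (-(1/2) * t^2))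
        = fun t : ℝ => -(t * Real.exp (-(1/2) * t^2)) := by ext t; simp [Pi.mul_apply]
    rw [this]; exact i_t_exp.neg

lemma int_t_exp : ∫ t : ℝ, t * Real.exp (-(1/2) * t^2) = 0 := by
  have h := MeasureTheory.integral_neg_eq_self (fun t : ℝ => t * Real.exp (-(1/2) * t^2)) volume
  simp only [neg_mul, neg_sq, integral_neg] at h ⊢
  linarith [h]

variable {d : ℕ}

lemma exp_dot_eq_prod (z : Fin d → ℝ) :
    Real.exp (-(1/2) * (z ⬝ᵥ z)) = ∏ m, Real.exp (-(1/2) * (z m)^2) := by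
  rw [← Real.exp_sum]
  congr 1
  simp only [dotProduct, Finset.mul_sum]
  congr 1; ext m; ring

lemma prod_form (k l : Fin d) (z : Fin d → ℝ) :
    Real.exp (-(1/2) * (z ⬝ᵥ z)) * (z k * z l)
      = ∏ m, ((if m = k then z m else 1) * (if m = l then z m else 1)
          * Real.exp (-(1/2) * (z m)^2)) := by
  simp only [Finset.prod_mul_distrib]
  rw [← exp_dot_eq_prod, Finset.prod_ite_eq' Finset.univ k (fun m => z m),
    Finset.prod_ite_eq' Finset.univ l (fun m => z m)]
  simp; ring

lemma std2_int (k l : Fin d) :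
    Integrable fun z : Fin d → ℝ => Real.exp (-(1/2) * (z ⬝ᵥ z)) * (z k * z l) := by
  have : ∀ m : Fin d, Integrable (fun t : ℝ =>
      (if m = k then t else 1) * (if m = l then t else 1) * Real.exp (-(1/2) * t^2)) := by
    intro m
    by_cases hk : m = k
    · by_cases hl : m = l
      · simp only [if_pos hk, if_pos hl]
        have : (fun t : ℝ => t * t * Real.exp (-(1/2) * t^2))
            = fun t : ℝ => t^2 * Real.exp (-(1/2) * t^2) := by ext t; ring
        rw [this]; exact i_t2_exp
      · simp only [if_pos hk, if_neg hl, mul_one]; exact i_t_exp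
    · by_cases hl : m = l
      · simp only [if_neg hk, if_pos hl, one_mul]; exact i_t_exp
      · simp only [if_neg hk, if_neg hl, one_mul]; exact i_exp
  have h := MeasureTheory.Integrable.fintype_prod (f := fun (m : Fin d) (t : ℝ) =>
      (if m = k then t else 1) * (if m = l then t else 1) * Real.exp (-(1/2) * t^2)) this
  exact h.congr (Filter.Eventually.of_forall fun z => (prod_form k l z).symm)

lemma std0_int : Integrable fun z : Fin d → ℝ => Real.exp (-(1/2) * (z ⬝ᵥ z)) := by
  have h := MeasureTheory.Integrable.fintype_prod (ι := Fin d)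
    (f := fun (_ : Fin d) (t : ℝ) => Real.exp (-(1/2) * t^2)) (fun _ => i_exp)
  exact h.congr (Filter.Eventually.of_forall fun z => (exp_dot_eq_prod z).symm)

lemma std0_val : ∫ z : Fin d → ℝ, Real.exp (-(1/2) * (z ⬝ᵥ z)) = √(2*π) ^ d := by
  simp_rw [exp_dot_eq_prod]
  rw [MeasureTheory.integral_fintype_prod_volume_eq_pow (ι := Fin d)
    (f := fun t : ℝ => Real.exp (-(1/2) * t^2)), int_exp, Fintype.card_fin]

lemma std2_val (k l : Fin d) :
    ∫ z : Fin d → ℝ, Real.exp (-(1/2) * (z ⬝ᵥ z)) * (z k * z l)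
      = (if k = l then (1:ℝ) else 0) * √(2*π) ^ d := by
  simp_rw [prod_form k l]
  rw [MeasureTheory.integral_fintype_prod_volume_eq_prod (ι := Fin d) (f := fun (m : Fin d) (t : ℝ) => (if m = k then t else 1) * (if m = l then t else 1) * Real.exp (-(1/2) * t^2))]
  by_cases hkl : k = l
  · subst hkl
    rw [if_pos rfl, one_mul]
    have hm : ∀ m : Fin d, (∫ t : ℝ, (if m = k then t else 1) * (if m = k then t else 1)
        * Real.exp (-(1/2) * t^2)) = √(2*π) := by
      intro m
      by_cases hk : m = k
      · simp only [if_pos hk]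
        rw [show (fun t : ℝ => t * t * Real.exp (-(1/2) * t^2))
            = fun t : ℝ => t^2 * Real.exp (-(1/2) * t^2) from by ext t; ring]
        exact int_t2_exp
      · simp only [if_neg hk, one_mul]; exact int_exp
    rw [Finset.prod_congr rfl (fun m _ => hm m), Finset.prod_const, Finset.card_univ,
      Fintype.card_fin]
  · rw [if_neg hkl, zero_mul]
    refine Finset.prod_eq_zero (Finset.mem_univ k) ?_
    simp only [if_pos rfl, if_neg hkl, mul_one]
    exact int_t_exp

section CoV
variable {M : Matrix (Fin d) (Fin d) ℝ}

noncomputable def covEquiv (hM : M.det ≠ 0) : (Fin d → ℝ) ≃L[ℝ] (Fin d → ℝ) :=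
  (LinearMap.equivOfDetNeZero (Matrix.toLin' M)
    (by rwa [LinearMap.det_toLin'])).toContinuousLinearEquiv

lemma covEquiv_apply (hM : M.det ≠ 0) (z : Fin d → ℝ) : covEquiv hM z = M *ᵥ z := by
  simp [covEquiv, LinearMap.equivOfDetNeZero, LinearEquiv.ofIsUnitDet_apply,
    Matrix.toLin'_apply]

lemma map_mulVec_volume (hM : M.det ≠ 0) :
    Measure.map (fun z : Fin d → ℝ => M *ᵥ z) volume
      = ENNReal.ofReal |M.det|⁻¹ • volume := by
  have h := Real.map_matrix_volume_pi_eq_smul_volume_pi hM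
  have h2 : ⇑(Matrix.toLin' M) = fun z : Fin d → ℝ => M *ᵥ z :=
    funext fun z => Matrix.toLin'_apply M z
  rw [h2] at h
  rw [h, abs_inv]

lemma covEmbedding (hM : M.det ≠ 0) :
    MeasurableEmbedding (fun z : Fin d → ℝ => M *ᵥ z) := by
  have h := (covEquiv hM).toHomeomorph.measurableEmbedding
  have h2 : ⇑(covEquiv hM).toHomeomorph = fun z : Fin d → ℝ => M *ᵥ z :=
    funext fun z => covEquiv_apply hM z
  rwa [h2] at h

lemma integral_comp_mulVec (hM : M.det ≠ 0) (f : (Fin d → ℝ) → ℝ) :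
    ∫ z : Fin d → ℝ, f (M *ᵥ z) = |M.det|⁻¹ * ∫ y, f y := by
  rw [← (covEmbedding hM).integral_map, map_mulVec_volume hM, integral_smul_measure,
    ENNReal.toReal_ofReal (by positivity), smul_eq_mul]

lemma integrable_of_comp_mulVec (hM : M.det ≠ 0) {f : (Fin d → ℝ) → ℝ}
    (hf : Integrable fun z : Fin d → ℝ => f (M *ᵥ z)) : Integrable f := by
  have h1 : Integrable f (Measure.map (fun z : Fin d → ℝ => M *ᵥ z) volume) :=
    (covEmbedding hM).integrable_map_iff.mpr hf
  rw [map_mulVec_volume hM] at h1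
  exact (integrable_smul_measure (by simp [abs_ne_zero.mpr hM, hM]) ENNReal.ofReal_ne_top).mp h1

end CoV

lemma dot_mulVec_left (N : Matrix (Fin d) (Fin d) ℝ) (z w : Fin d → ℝ) :
    (N *ᵥ z) ⬝ᵥ w = z ⬝ᵥ (Nᵀ *ᵥ w) := by
  rw [dotProduct_comm, dotProduct_mulVec, dotProduct_comm, Matrix.mulVec_transpose]

open scoped MatrixOrder in
lemma key_integral {A : Matrix (Fin d) (Fin d) ℝ} (hA : A.PosDef) (i j : Fin d) :
    ∫ y : Fin d → ℝ, Real.exp (-(1/2) * (y ⬝ᵥ (A *ᵥ y)))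
      * ((A *ᵥ y) i * y j - (if i = j then (1:ℝ) else 0)) = 0 := by
  classical
  set f : (Fin d → ℝ) → ℝ := fun y => Real.exp (-(1/2) * (y ⬝ᵥ (A *ᵥ y)))
      * ((A *ᵥ y) i * y j - (if i = j then (1:ℝ) else 0)) with hf
  have hAsd := hA.posSemidef
  set B := CFC.sqrt A with hBdef
  have hB : B.PosSemidef := nonneg_iff_posSemidef.mp (CFC.sqrt_nonneg A)
  have hBB : B * B = A := CFC.sqrt_mul_sqrt_self A (nonneg_iff_posSemidef.mpr hAsd)
  have hBt : Bᵀ = B := by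
    rw [← Matrix.conjTranspose_eq_transpose_of_trivial]
    exact hB.1
  have hdetB : B.det ≠ 0 := by
    intro h
    have : A.det = 0 := by rw [← hBB, Matrix.det_mul, h, mul_zero]
    exact hA.det_pos.ne' this
  have hBinv : B * B⁻¹ = 1 := Matrix.mul_nonsing_inv B (isUnit_iff_ne_zero.mpr hdetB)
  have hinvB : B⁻¹ * B = 1 := Matrix.nonsing_inv_mul B (isUnit_iff_ne_zero.mpr hdetB)
  have hBit : (B⁻¹)ᵀ = B⁻¹ := by rw [Matrix.transpose_nonsing_inv, hBt]
  have hdetBi : (B⁻¹).det ≠ 0 := by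
    rw [Matrix.det_nonsing_inv, Ring.inverse_eq_inv]
    exact inv_ne_zero hdetB
  have hAM : A * B⁻¹ = B := by rw [← hBB, Matrix.mul_assoc, hBinv, Matrix.mul_one]
  have hquad : ∀ z : Fin d → ℝ, (B⁻¹ *ᵥ z) ⬝ᵥ (A *ᵥ (B⁻¹ *ᵥ z)) = z ⬝ᵥ z := by
    intro z
    rw [Matrix.mulVec_mulVec, hAM, dot_mulVec_left, hBit, Matrix.mulVec_mulVec, hinvB,
      Matrix.one_mulVec]
  have hpt : ∀ z : Fin d → ℝ, f (B⁻¹ *ᵥ z)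
      = (∑ k, ∑ l, (B i k * B⁻¹ j l)
          * (Real.exp (-(1/2) * (z ⬝ᵥ z)) * (z k * z l)))
        - (if i = j then (1:ℝ) else 0) * Real.exp (-(1/2) * (z ⬝ᵥ z)) := by
    intro z
    simp only [hf]
    rw [hquad z]
    rw [Matrix.mulVec_mulVec, hAM]
    have h1 : (B *ᵥ z) i = ∑ k, B i k * z k := by
      simp [Matrix.mulVec, dotProduct]
    have h2 : (B⁻¹ *ᵥ z) j = ∑ l, B⁻¹ j l * z l := by
      simp [Matrix.mulVec, dotProduct]
    rw [h1, h2, Finset.sum_mul_sum, mul_sub, Finset.mul_sum]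
    congr 1
    · refine Finset.sum_congr rfl fun k _ => ?_
      rw [Finset.mul_sum]
      refine Finset.sum_congr rfl fun l _ => ?_
      ring
    · ring
  have hz : ∫ z : Fin d → ℝ, f (B⁻¹ *ᵥ z) = 0 := by
    have hint : ∀ k l : Fin d, Integrable (fun z : Fin d → ℝ =>
        (B i k * B⁻¹ j l) * (Real.exp (-(1/2) * (z ⬝ᵥ z)) * (z k * z l))) :=
      fun k l => (std2_int k l).const_mul _
    have hsum : Integrable (fun z : Fin d → ℝ => ∑ k, ∑ l, (B i k * B⁻¹ j l)
        * (Real.exp (-(1/2) * (z ⬝ᵥ z)) * (z k * z l))) :=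
      integrable_finset_sum _ fun k _ => integrable_finset_sum _ fun l _ => hint k l
    calc ∫ z : Fin d → ℝ, f (B⁻¹ *ᵥ z)
        = ∫ z : Fin d → ℝ, ((∑ k, ∑ l, (B i k * B⁻¹ j l)
            * (Real.exp (-(1/2) * (z ⬝ᵥ z)) * (z k * z l)))
          - (if i = j then (1:ℝ) else 0) * Real.exp (-(1/2) * (z ⬝ᵥ z))) := by
          exact integral_congr_ae (Filter.Eventually.of_forall hpt)
      _ = (∫ z : Fin d → ℝ, ∑ k, ∑ l, (B i k * B⁻¹ j l)
            * (Real.exp (-(1/2) * (z ⬝ᵥ z)) * (z k * z l)))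
          - ∫ z : Fin d → ℝ, (if i = j then (1:ℝ) else 0)
            * Real.exp (-(1/2) * (z ⬝ᵥ z)) := by
          exact integral_sub hsum (std0_int.const_mul _)
      _ = (∑ k, ∑ l, (B i k * B⁻¹ j l) * ((if k = l then (1:ℝ) else 0) * √(2*π) ^ d))
          - (if i = j then (1:ℝ) else 0) * √(2*π) ^ d := by
          rw [integral_finset_sum _ (fun k _ => integrable_finset_sum _ fun l _ => hint k l)]
          congr 1
          · refine Finset.sum_congr rfl fun k _ => ?_
            rw [integral_finset_sum _ fun l _ => hint k l]
            refine Finset.sum_congr rfl fun l _ => ?_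
            rw [integral_const_mul, std2_val]
          · rw [integral_const_mul, std0_val]
      _ = 0 := by
          have hcollapse : ∀ k : Fin d, (∑ l, (B i k * B⁻¹ j l)
              * ((if k = l then (1:ℝ) else 0) * √(2*π) ^ d))
                = B i k * B⁻¹ j k * √(2*π) ^ d := by
            intro k
            rw [Finset.sum_eq_single k]
            · rw [if_pos rfl, one_mul]
            · intro l _ hl
              rw [if_neg (Ne.symm hl), zero_mul, mul_zero]
            · intro h; exact absurd (Finset.mem_univ k) h
          simp only [hcollapse]
          rw [← Finset.sum_mul]
          have hBBi : ∑ k, B i k * B⁻¹ j k = (if i = j then (1:ℝ) else 0) := by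
            have h1 : ∑ k, B i k * B⁻¹ j k = (B * (B⁻¹)ᵀ) i j := by
              simp [Matrix.mul_apply, Matrix.transpose_apply]
            rw [h1, hBit, hBinv, Matrix.one_apply]
          rw [hBBi, sub_self]
  have h := integral_comp_mulVec hdetBi f
  rw [hz] at h
  rcases mul_eq_zero.mp h.symm with h1 | h2
  · exact absurd h1 (inv_ne_zero (abs_ne_zero.mpr hdetBi))
  · exact h2

lemma posDef_smul {A : Matrix (Fin d) (Fin d) ℝ} (hA : A.PosDef) {c : ℝ} (hc : 0 < c) :
    (c • A).PosDef := by
  exact hA.smul hc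

/-- the population `γ`-Stein estimating equations for the Gaussian
model hold at the true parameters: for `X ∼ N(μ, Σ)` (density `u/∫u`),
`E[u(X)^γ Σ⁻¹(X−μ)] = 0` and `E[u(X)^γ ((γ+1)Σ⁻¹(X−μ)(X−μ)ᵀ − I_d)] = 0`. -/
theorem gaussian_gamma_stein_estimating_equations
    (d : ℕ) (μv : Fin d → ℝ) (S : Matrix (Fin d) (Fin d) ℝ) (hS : S.PosDef)
    (γ : ℝ) (hγ : 0 ≤ γ) :
    (∀ i, ∫ x : Fin d → ℝ,
        (gaussU μv S x / ∫ y : Fin d → ℝ, gaussU μv S y) * gaussU μv S x ^ γ *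
          (S⁻¹ *ᵥ (x - μv)) i = 0)
    ∧ ∀ i j, ∫ x : Fin d → ℝ,
        (gaussU μv S x / ∫ y : Fin d → ℝ, gaussU μv S y) * gaussU μv S x ^ γ *
          ((γ + 1) * (S⁻¹ *ᵥ (x - μv)) i * (x - μv) j
            - (1 : Matrix (Fin d) (Fin d) ℝ) i j) = 0 := by
  classical
  have hc : (0:ℝ) < γ + 1 := by linarith
  have hSinv : (S⁻¹).PosDef := hS.inv
  have hA : ((γ + 1) • S⁻¹).PosDef := posDef_smul hSinv hc
  set Z : ℝ := ∫ y : Fin d → ℝ, gaussU μv S y with hZ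
  constructor
  · -- first estimating equation, by reflection symmetry
    intro i
    set F : (Fin d → ℝ) → ℝ := fun x =>
      (gaussU μv S x / Z) * gaussU μv S x ^ γ * (S⁻¹ *ᵥ (x - μv)) i with hF
    have hrefl : ∀ x, F (μv + μv - x) = -F x := by
      intro x
      have hsub : μv + μv - x - μv = -(x - μv) := by ring
      have hg : gaussU μv S (μv + μv - x) = gaussU μv S x := by
        rw [gaussU, gaussU, hsub, Matrix.mulVec_neg, dotProduct_neg, neg_dotProduct, neg_neg]
      rw [hF]
      simp only [hg, hsub, Matrix.mulVec_neg]
      simp only [Pi.neg_apply]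
      ring
    have h1 : ∫ x, F x = ∫ x, F (μv + μv - x) :=
      (integral_sub_left_eq_self F volume (μv + μv)).symm
    have h2 : ∫ x, F (μv + μv - x) = -∫ x, F x := by
      simp only [hrefl, integral_neg]
    have := h1.trans h2
    show ∫ x, F x = 0
    linarith
  · -- second estimating equation, via the key Gaussian moment identity
    intro i j
    set A : Matrix (Fin d) (Fin d) ℝ := (γ + 1) • S⁻¹ with hAdef
    set H : (Fin d → ℝ) → ℝ := fun y =>
      (1 / Z) * (Real.exp (-(1/2) * (y ⬝ᵥ (A *ᵥ y)))
        * ((A *ᵥ y) i * y j - (if i = j then (1:ℝ) else 0))) with hH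
    have hpt : ∀ x : Fin d → ℝ,
        (gaussU μv S x / Z) * gaussU μv S x ^ γ *
          ((γ + 1) * (S⁻¹ *ᵥ (x - μv)) i * (x - μv) j
            - (1 : Matrix (Fin d) (Fin d) ℝ) i j) = H (x - μv) := by
      intro x
      set y := x - μv with hy
      have hq : y ⬝ᵥ (A *ᵥ y) = (γ + 1) * (y ⬝ᵥ (S⁻¹ *ᵥ y)) := by
        rw [hAdef, Matrix.smul_mulVec, dotProduct_smul, smul_eq_mul]
      have hAy : ∀ m, (A *ᵥ y) m = (γ + 1) * (S⁻¹ *ᵥ y) m := by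
        intro m
        rw [hAdef, Matrix.smul_mulVec, Pi.smul_apply, smul_eq_mul]
      have hgu : gaussU μv S x = Real.exp (-(1/2) * (y ⬝ᵥ (S⁻¹ *ᵥ y))) := rfl
      have hpow : gaussU μv S x ^ γ
          = Real.exp (γ * (-(1/2) * (y ⬝ᵥ (S⁻¹ *ᵥ y)))) := by
        rw [hgu, Real.rpow_def_of_pos (Real.exp_pos _), Real.log_exp, mul_comm]
      rw [hH, hpow]
      simp only [hgu, hq, hAy, Matrix.one_apply]
      have hee : Real.exp (-(1/2) * (y ⬝ᵥ (S⁻¹ *ᵥ y)))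
            * Real.exp (γ * (-(1/2) * (y ⬝ᵥ (S⁻¹ *ᵥ y))))
          = Real.exp (-(1/2) * ((γ + 1) * (y ⬝ᵥ (S⁻¹ *ᵥ y)))) := by
        rw [← Real.exp_add]
        congr 1
        ring
      rw [div_mul_eq_mul_div, hee]
      ring
    have hshift : ∫ x : Fin d → ℝ,
        (gaussU μv S x / Z) * gaussU μv S x ^ γ *
          ((γ + 1) * (S⁻¹ *ᵥ (x - μv)) i * (x - μv) j
            - (1 : Matrix (Fin d) (Fin d) ℝ) i j) = ∫ y, H y := by
      rw [show (fun x : Fin d → ℝ => (gaussU μv S x / Z) * gaussU μv S x ^ γ *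
          ((γ + 1) * (S⁻¹ *ᵥ (x - μv)) i * (x - μv) j
            - (1 : Matrix (Fin d) (Fin d) ℝ) i j)) = fun x => H (x - μv) from funext hpt]
      exact integral_sub_right_eq_self H μv
    rw [hshift, hH]
    rw [MeasureTheory.integral_const_mul, key_integral hA i j, mul_zero]
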